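/- arXiv:1501.02458 — 3 statements merged into one kernel-verified Lean document; each statement's English description precedes it below -/
import Mathlib

section
/- Consider a sequence of heterogeneity-model problems indexed by k with M fixed: dimensions p_k, supports S_{m,k} = {j : β_j^{m*}(k) ≠ 0}, sample sizes n_{m,k} with n_k = ∑_m n_{m,k} → ∞, designs, weights, and errors satisfying Condition 1(a) with fixed σ_m > 0. Assume there are constants 0 < c ≤ C < ∞ such that c ≤ ρ₁^{*m,k} and ρ̄₂^{*m,k} ≤ C for all m,k, that n_k/n_{m,k} ≤ C, and that |S_k|/n_k → 0 where S_k = ∪_m S_{m,k}. Then the oracle estimators satisfy ‖β̌_{S_m}^m − β_{S_m}^{m*}‖₂ = O_p(√(|S_{m,k}|/n_{m,k})); that is, for every δ > 0 there exist a constant C' and an index K such that for all k ≥ K, P(there exists m with ‖β̌_{S_m}^m − β_{S_m}^{m*}‖₂ > C' √(|S_{m,k}|/n_{m,k})) ≤ δ. (Corollary 3.) -/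
open MeasureTheory Matrix Finset Real Filter Topology

noncomputable section

/-- Rayleigh-quotient characterization of the smallest eigenvalue of a symmetric matrix. -/
def lmin {ι : Type*} [Fintype ι] (A : Matrix ι ι ℝ) : ℝ :=
  sInf {r : ℝ | ∃ v : ι → ℝ, (∑ i, v i ^ 2) = 1 ∧ r = v ⬝ᵥ A *ᵥ v}

/-- Rayleigh-quotient characterization of the largest eigenvalue of a symmetric matrix. -/
def lmax {ι : Type*} [Fintype ι] (A : Matrix ι ι ℝ) : ℝ :=
  sSup {r : ℝ | ∃ v : ι → ℝ, (∑ i, v i ^ 2) = 1 ∧ r = v ⬝ᵥ A *ᵥ v}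

/-- Condition 1(a): sub-Gaussian error vector with noise level σ. -/
def SubG {Ω : Type*} [MeasurableSpace Ω] (P : Measure Ω) {d : ℕ}
    (ε : Ω → Fin d → ℝ) (σ : ℝ) : Prop :=
  ∀ ν : Fin d → ℝ, (∑ i, ν i ^ 2) = 1 → ∀ t : ℝ, 0 ≤ t →
    P {ω | t ≤ |ν ⬝ᵥ ε ω|} ≤ ENNReal.ofReal (2 * Real.exp (-t ^ 2 / (2 * σ ^ 2)))

/-- Submatrix of the columns indexed by a finite set `S`. -/
def colSub {d p : ℕ} (A : Matrix (Fin d) (Fin p) ℝ) (S : Finset (Fin p)) :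
    Matrix (Fin d) {j // j ∈ S} ℝ := A.submatrix id (fun j => (j : Fin p))



lemma quad_zero (a b : ℝ) (h : ∀ t : ℝ, 0 ≤ a * t + b * t^2) : a = 0 := by
  have h1 := h 1
  have h2 := h (-1)
  have hb : 0 ≤ b := by linarith
  rcases eq_or_lt_of_le hb with hb0 | hb0
  · linarith [h 1, h (-1), hb0]
  · have h3 := h (-a / (2*b))
    have hb' : b ≠ 0 := ne_of_gt hb0
    have : a * (-a / (2*b)) + b * (-a / (2*b))^2 = -(a^2) / (4*b) := by
      field_simp; ring
    rw [this] at h3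
    have : a^2 ≤ 0 := by
      by_contra hcon
      push_neg at hcon
      have : -(a^2)/(4*b) < 0 := div_neg_of_neg_of_pos (by linarith) (by linarith)
      linarith
    nlinarith

lemma dot_symm {d : ℕ} (Wm : Matrix (Fin d) (Fin d) ℝ) (hW : Wmᵀ = Wm) (x y : Fin d → ℝ) :
    x ⬝ᵥ (Wm *ᵥ y) = y ⬝ᵥ (Wm *ᵥ x) := by
  rw [Matrix.dotProduct_mulVec]
  nth_rewrite 1 [← hW]
  rw [Matrix.vecMul_transpose, dotProduct_comm]

lemma dot_shift {d : ℕ} {ι : Type*} [Fintype ι] (Xs : Matrix (Fin d) ι ℝ)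
    (g : ι → ℝ) (y : Fin d → ℝ) : (Xs *ᵥ g) ⬝ᵥ y = g ⬝ᵥ (Xsᵀ *ᵥ y) := by
  rw [dotProduct_comm, Matrix.dotProduct_mulVec, ← Matrix.transpose_transpose Xs,
    Matrix.vecMul_transpose, Matrix.transpose_transpose, dotProduct_comm]

lemma normal_eq {d : ℕ} {ι : Type*} [Fintype ι]
    (Xs : Matrix (Fin d) ι ℝ) (Wm : Matrix (Fin d) (Fin d) ℝ) (hW : Wmᵀ = Wm)
    (Ym : Fin d → ℝ) (β : ι → ℝ)
    (hmin : ∀ g : ι → ℝ,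
      (Ym - Xs *ᵥ β) ⬝ᵥ (Wm *ᵥ (Ym - Xs *ᵥ β)) ≤
        (Ym - Xs *ᵥ g) ⬝ᵥ (Wm *ᵥ (Ym - Xs *ᵥ g))) :
    Xsᵀ *ᵥ (Wm *ᵥ (Ym - Xs *ᵥ β)) = 0 := by
  set r : Fin d → ℝ := Ym - Xs *ᵥ β with hr
  have key : ∀ g : ι → ℝ, (Xs *ᵥ g) ⬝ᵥ (Wm *ᵥ r) = 0 := by
    intro g
    have h20 : -2 * ((Xs *ᵥ g) ⬝ᵥ (Wm *ᵥ r)) = 0 := by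
      apply quad_zero _ ((Xs *ᵥ g) ⬝ᵥ (Wm *ᵥ (Xs *ᵥ g)))
      intro t
      have h := hmin (β + t • g)
      have hexp : Ym - Xs *ᵥ (β + t • g) = r - t • (Xs *ᵥ g) := by
        rw [Matrix.mulVec_add, Matrix.mulVec_smul, hr]
        abel
      rw [hexp] at h
      set z : Fin d → ℝ := Xs *ᵥ g with hz
      have hWz : Wm *ᵥ (r - t • z) = (Wm *ᵥ r) - t • (Wm *ᵥ z) := by
        rw [Matrix.mulVec_sub, Matrix.mulVec_smul]
      rw [hWz] at h
      have hrWz : r ⬝ᵥ (Wm *ᵥ z) = z ⬝ᵥ (Wm *ᵥ r) := dot_symm Wm hW r z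
      have hbig : (r - t • z) ⬝ᵥ ((Wm *ᵥ r) - t • (Wm *ᵥ z)) =
          r ⬝ᵥ (Wm *ᵥ r) + (-2 * (z ⬝ᵥ (Wm *ᵥ r))) * t + (z ⬝ᵥ (Wm *ᵥ z)) * t^2 := by
        rw [sub_dotProduct, dotProduct_sub, dotProduct_sub,
          smul_dotProduct, smul_dotProduct, dotProduct_smul,
          dotProduct_smul, hrWz]
        simp only [smul_eq_mul]
        ring
      rw [hbig] at h
      nlinarith [h]
    linarith
  have key2 : ∀ g : ι → ℝ, g ⬝ᵥ (Xsᵀ *ᵥ (Wm *ᵥ r)) = 0 := by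
    intro g
    rw [← dot_shift]
    exact key g
  have := key2 (Xsᵀ *ᵥ (Wm *ᵥ r))
  exact dotProduct_self_eq_zero.mp this



lemma rayleigh_abs_le {ι : Type*} [Fintype ι] (A : Matrix ι ι ℝ) {r : ℝ}
    (hr : r ∈ {r : ℝ | ∃ v : ι → ℝ, (∑ i, v i ^ 2) = 1 ∧ r = v ⬝ᵥ A *ᵥ v}) :
    |r| ≤ ∑ i, ∑ j, |A i j| := by
  obtain ⟨v, hv, rfl⟩ := hr
  have hv1 : ∀ i, |v i| ≤ 1 := by
    intro i
    have h1 : v i ^ 2 ≤ 1 := by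
      rw [← hv]
      exact Finset.single_le_sum (fun j _ => sq_nonneg (v j)) (mem_univ i)
    nlinarith [abs_nonneg (v i), sq_abs (v i)]
  have : v ⬝ᵥ A *ᵥ v = ∑ i, ∑ j, v i * (A i j * v j) := by
    simp [dotProduct, Matrix.mulVec, Finset.mul_sum]
  rw [this]
  calc |∑ i, ∑ j, v i * (A i j * v j)| ≤ ∑ i, ∑ j, |v i * (A i j * v j)| := by
        apply (Finset.abs_sum_le_sum_abs _ _).trans
        apply Finset.sum_le_sum
        intro i _
        exact Finset.abs_sum_le_sum_abs _ _
    _ ≤ ∑ i, ∑ j, |A i j| := by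
        apply Finset.sum_le_sum; intro i _; apply Finset.sum_le_sum; intro j _
        rw [abs_mul, abs_mul]
        calc |v i| * (|A i j| * |v j|) ≤ 1 * (|A i j| * 1) := by
              apply mul_le_mul (hv1 i) _ (by positivity) zero_le_one
              exact mul_le_mul_of_nonneg_left (hv1 j) (abs_nonneg _)
          _ = |A i j| := by ring

lemma lmin_mul_le {ι : Type*} [Fintype ι] (A : Matrix ι ι ℝ) (v : ι → ℝ) :
    lmin A * (∑ i, v i ^ 2) ≤ v ⬝ᵥ A *ᵥ v := by
  rcases eq_or_lt_of_le (Finset.sum_nonneg (fun i _ => sq_nonneg (v i))) with h0 | h0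
  · have hvz : v = 0 := by
      funext i
      have := (Finset.sum_eq_zero_iff_of_nonneg (fun j _ => sq_nonneg (v j))).mp h0.symm i (mem_univ i)
      exact pow_eq_zero_iff (n := 2) (by norm_num) |>.mp this
    simp [hvz, ← h0]
  · set q : ℝ := Real.sqrt (∑ i, v i ^ 2) with hq
    have hqpos : 0 < q := Real.sqrt_pos.mpr h0
    have hq2 : q ^ 2 = ∑ i, v i ^ 2 := Real.sq_sqrt h0.le
    set ν : ι → ℝ := q⁻¹ • v with hν
    have hν1 : (∑ i, ν i ^ 2) = 1 := by
      simp only [hν, Pi.smul_apply, smul_eq_mul, mul_pow, ← Finset.mul_sum, ← hq2]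
      field_simp
    have hmem : ν ⬝ᵥ A *ᵥ ν ∈ {r : ℝ | ∃ v : ι → ℝ, (∑ i, v i ^ 2) = 1 ∧ r = v ⬝ᵥ A *ᵥ v} :=
      ⟨ν, hν1, rfl⟩
    have hbdd : BddBelow {r : ℝ | ∃ v : ι → ℝ, (∑ i, v i ^ 2) = 1 ∧ r = v ⬝ᵥ A *ᵥ v} :=
      ⟨-(∑ i, ∑ j, |A i j|), fun r hr => neg_le_of_abs_le (rayleigh_abs_le A hr)⟩
    have hle : lmin A ≤ ν ⬝ᵥ A *ᵥ ν := csInf_le hbdd hmem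
    have hray : ν ⬝ᵥ A *ᵥ ν = q⁻¹ * q⁻¹ * (v ⬝ᵥ A *ᵥ v) := by
      rw [hν]
      rw [Matrix.mulVec_smul, smul_dotProduct, dotProduct_smul]
      simp [smul_eq_mul]; ring
    rw [hray] at hle
    have := mul_le_mul_of_nonneg_right hle (le_of_lt (by positivity : (0:ℝ) < q^2))
    calc lmin A * (∑ i, v i ^ 2) = lmin A * q^2 := by rw [hq2]
      _ ≤ q⁻¹ * q⁻¹ * (v ⬝ᵥ A *ᵥ v) * q^2 := this
      _ = v ⬝ᵥ A *ᵥ v := by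
          have hq0 : q ≠ 0 := ne_of_gt hqpos
          rw [pow_two]
          field_simp

lemma le_lmax {ι : Type*} [Fintype ι] (A : Matrix ι ι ℝ) (v : ι → ℝ)
    (hv : (∑ i, v i ^ 2) = 1) : v ⬝ᵥ A *ᵥ v ≤ lmax A := by
  have hbdd : BddAbove {r : ℝ | ∃ v : ι → ℝ, (∑ i, v i ^ 2) = 1 ∧ r = v ⬝ᵥ A *ᵥ v} :=
    ⟨(∑ i, ∑ j, |A i j|), fun r hr => le_of_abs_le (rayleigh_abs_le A hr)⟩
  exact le_csSup hbdd ⟨v, hv, rfl⟩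

lemma lmin_empty {ι : Type*} [Fintype ι] [IsEmpty ι] (A : Matrix ι ι ℝ) : lmin A = 0 := by
  have : {r : ℝ | ∃ v : ι → ℝ, (∑ i, v i ^ 2) = 1 ∧ r = v ⬝ᵥ A *ᵥ v} = ∅ := by
    ext r; simp
  rw [lmin, this, Real.sInf_empty]


lemma tsum_exp_bound (a : ℝ) (ha : 0 < a) :
    ∑' i : ℕ, ENNReal.ofReal (2 * Real.exp (-(((i : ℝ) + 1) * a))) ≤ ENNReal.ofReal (2 / a) := by
  have hx : Real.exp (-a) < 1 := Real.exp_lt_one_iff.mpr (by linarith)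
  have hx0 : 0 < Real.exp (-a) := Real.exp_pos _
  have heq : ∀ i : ℕ, ENNReal.ofReal (2 * Real.exp (-(((i : ℝ) + 1) * a)))
      = ENNReal.ofReal (2 * Real.exp (-a)) * (ENNReal.ofReal (Real.exp (-a))) ^ i := by
    intro i
    rw [← ENNReal.ofReal_pow hx0.le, ← ENNReal.ofReal_mul (by positivity)]
    congr 1
    rw [← Real.exp_nat_mul, mul_assoc, ← Real.exp_add]
    congr 1
    ring
  calc ∑' i : ℕ, ENNReal.ofReal (2 * Real.exp (-(((i : ℝ) + 1) * a)))
      = ENNReal.ofReal (2 * Real.exp (-a)) * ∑' i : ℕ, (ENNReal.ofReal (Real.exp (-a))) ^ i := by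
        simp_rw [heq]; rw [ENNReal.tsum_mul_left]
    _ = ENNReal.ofReal (2 * Real.exp (-a)) * (1 - ENNReal.ofReal (Real.exp (-a)))⁻¹ := by
        rw [ENNReal.tsum_geometric]
    _ = ENNReal.ofReal (2 * Real.exp (-a)) * ENNReal.ofReal ((1 - Real.exp (-a))⁻¹) := by
        congr 1
        rw [← ENNReal.ofReal_one, ← ENNReal.ofReal_sub _ hx0.le,
          ENNReal.ofReal_inv_of_pos (by linarith)]
    _ = ENNReal.ofReal (2 * Real.exp (-a) * (1 - Real.exp (-a))⁻¹) := by
        rw [← ENNReal.ofReal_mul (by positivity)]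
    _ ≤ ENNReal.ofReal (2 / a) := by
        apply ENNReal.ofReal_le_ofReal
        rw [← div_eq_mul_inv, div_le_div_iff₀ (by linarith) ha]
        have key : (1 + a) * Real.exp (-a) ≤ 1 := by
          have h1 : 1 + a ≤ Real.exp a := by linarith [Real.add_one_le_exp a]
          have h2 : Real.exp a * Real.exp (-a) = 1 := by
            rw [← Real.exp_add]; simp
          nlinarith [Real.exp_pos (-a)]
        nlinarith

lemma envelope_exists {Ω : Type*} [MeasurableSpace Ω] (P : Measure Ω) [IsProbabilityMeasure P]
    (h : Ω → ℝ) (a : ℝ) (ha : 0 < a)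
    (htail : ∀ i : ℕ, P {ω | ((i : ℝ) + 1) ≤ h ω} ≤
      ENNReal.ofReal (2 * Real.exp (-(((i : ℝ) + 1) * a)))) :
    ∃ F : Ω → ENNReal, Measurable F ∧ (∀ ω, ENNReal.ofReal (h ω) ≤ F ω) ∧
      ∫⁻ ω, F ω ∂P ≤ ENNReal.ofReal (1 + 2 / a) := by
  set T : ℕ → Set Ω := fun i => toMeasurable P {ω | ((i : ℝ) + 1) ≤ h ω} with hT
  refine ⟨fun ω => 1 + ∑' i : ℕ, (T i).indicator (fun _ => (1 : ENNReal)) ω, ?_, ?_, ?_⟩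
  · apply Measurable.const_add
    apply Measurable.ennreal_tsum
    intro i
    exact measurable_const.indicator (measurableSet_toMeasurable P _)
  · intro ω
    set m : ℕ := ⌊h ω⌋₊ with hm
    have hle : h ω < (m : ℝ) + 1 := Nat.lt_floor_add_one _
    have hsum : (m : ENNReal) ≤ ∑' i : ℕ, (T i).indicator (fun _ => (1 : ENNReal)) ω := by
      have : ∀ i ∈ Finset.range m, (T i).indicator (fun _ => (1 : ENNReal)) ω = 1 := by
        intro i hi
        rw [Finset.mem_range] at hi
        apply Set.indicator_of_mem
        apply subset_toMeasurable
        show ((i : ℝ) + 1) ≤ h ω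
        have h1 : ((i : ℝ) + 1) ≤ (m : ℝ) := by exact_mod_cast Nat.succ_le_of_lt hi
        have h2 : (m : ℝ) ≤ h ω := by
          apply Nat.floor_le
          by_contra hneg
          push_neg at hneg
          have : m = 0 := Nat.floor_eq_zero.mpr (by linarith)
          rw [this] at h1
          simp at h1
          -- h1 : (i:ℝ) + 1 ≤ 0, impossible
          have : (0:ℝ) ≤ (i:ℝ) := Nat.cast_nonneg i
          linarith
        linarith
      calc (m : ENNReal) = ∑ i ∈ Finset.range m, (T i).indicator (fun _ => (1 : ENNReal)) ω := by
            rw [Finset.sum_congr rfl this]; simp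
        _ ≤ _ := ENNReal.sum_le_tsum _
    calc ENNReal.ofReal (h ω) ≤ ENNReal.ofReal ((m : ℝ) + 1) := ENNReal.ofReal_le_ofReal hle.le
      _ = (m : ENNReal) + 1 := by
          rw [ENNReal.ofReal_add (Nat.cast_nonneg m) zero_le_one]
          simp
      _ ≤ 1 + ∑' i : ℕ, (T i).indicator (fun _ => (1 : ENNReal)) ω := by
          rw [add_comm]
          exact add_le_add le_rfl hsum
  · rw [lintegral_add_left measurable_const]
    simp only [lintegral_const, measure_univ, mul_one, one_mul]
    have : ∫⁻ ω, ∑' i : ℕ, (T i).indicator (fun _ => (1 : ENNReal)) ω ∂P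
        = ∑' i : ℕ, P (T i) := by
      rw [lintegral_tsum (fun i => (measurable_const.indicator
        (measurableSet_toMeasurable P _)).aemeasurable)]
      congr 1
      funext i
      rw [lintegral_indicator (measurableSet_toMeasurable P _)]
      simp only [lintegral_const, one_mul, Measure.restrict_apply, MeasurableSet.univ,
        Set.univ_inter]
      rfl
    rw [this]
    have hsum_le : ∑' i : ℕ, P (T i) ≤ ENNReal.ofReal (2 / a) := by
      calc ∑' i : ℕ, P (T i) = ∑' i : ℕ, P {ω | ((i : ℝ) + 1) ≤ h ω} := by
            congr 1; funext i; exact measure_toMeasurable _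
        _ ≤ ∑' i : ℕ, ENNReal.ofReal (2 * Real.exp (-(((i : ℝ) + 1) * a))) :=
            ENNReal.tsum_le_tsum htail
        _ ≤ ENNReal.ofReal (2 / a) := tsum_exp_bound a ha
    calc 1 + ∑' i : ℕ, P (T i) ≤ 1 + ENNReal.ofReal (2 / a) := add_le_add le_rfl hsum_le
      _ = ENNReal.ofReal (1 + 2 / a) := by
          rw [ENNReal.ofReal_add zero_le_one (by positivity)]
          simp


lemma markov_sum_sq {Ω : Type*} [MeasurableSpace Ω] (P : Measure Ω) [IsProbabilityMeasure P]
    {ι : Type*} [Fintype ι] (h : ι → Ω → ℝ) (hnn : ∀ j ω, 0 ≤ h j ω) (a : ℝ) (ha : 0 < a)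
    (htail : ∀ j, ∀ i : ℕ, P {ω | ((i : ℝ) + 1) ≤ h j ω} ≤
      ENNReal.ofReal (2 * Real.exp (-(((i : ℝ) + 1) * a))))
    (T : ℝ) (hT : 0 < T) :
    P {ω | T ≤ ∑ j, h j ω} ≤
      ENNReal.ofReal ((Fintype.card ι) * (1 + 2 / a) / T) := by
  choose F hFmeas hFge hFint using fun j => envelope_exists P (h j) a ha (htail j)
  have hGmeas : Measurable (fun ω => ∑ j, F j ω) := Finset.measurable_sum _ (fun j _ => hFmeas j)
  have hsub : {ω | T ≤ ∑ j, h j ω} ⊆ {ω | ENNReal.ofReal T ≤ ∑ j, F j ω} := by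
    intro ω hω
    simp only [Set.mem_setOf_eq] at hω ⊢
    calc ENNReal.ofReal T ≤ ENNReal.ofReal (∑ j, h j ω) := ENNReal.ofReal_le_ofReal hω
      _ = ∑ j, ENNReal.ofReal (h j ω) := ENNReal.ofReal_sum_of_nonneg (fun j _ => hnn j ω)
      _ ≤ ∑ j, F j ω := Finset.sum_le_sum (fun j _ => hFge j ω)
  have hmarkov := meas_ge_le_lintegral_div hGmeas.aemeasurable
    (ENNReal.ofReal_pos.mpr hT).ne' ENNReal.ofReal_ne_top (μ := P)
  calc P {ω | T ≤ ∑ j, h j ω} ≤ P {ω | ENNReal.ofReal T ≤ ∑ j, F j ω} := measure_mono hsub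
    _ ≤ (∫⁻ ω, ∑ j, F j ω ∂P) / ENNReal.ofReal T := hmarkov
    _ ≤ ENNReal.ofReal ((Fintype.card ι) * (1 + 2 / a)) / ENNReal.ofReal T := by
        apply ENNReal.div_le_div_right
        rw [lintegral_finset_sum _ (fun j _ => hFmeas j)]
        calc ∑ j, ∫⁻ ω, F j ω ∂P ≤ ∑ _j : ι, ENNReal.ofReal (1 + 2 / a) :=
              Finset.sum_le_sum (fun j _ => hFint j)
          _ = (Fintype.card ι) * ENNReal.ofReal (1 + 2 / a) := by
              rw [Finset.sum_const]; simp [nsmul_eq_mul, Finset.card_univ]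
          _ = ENNReal.ofReal ((Fintype.card ι) * (1 + 2 / a)) := by
              rw [ENNReal.ofReal_mul (by positivity)]
              simp
    _ = ENNReal.ofReal ((Fintype.card ι) * (1 + 2 / a) / T) := by
        rw [ENNReal.ofReal_div_of_pos hT]


lemma subG_dot_tail {Ω : Type*} [MeasurableSpace Ω] (P : Measure Ω) {d : ℕ}
    (ε : Ω → Fin d → ℝ) (σ : ℝ) (hσ : 0 < σ) (hs : SubG P ε σ)
    (w : Fin d → ℝ) (b : ℝ) (hb : 0 < b) (hwb : (∑ i, w i ^ 2) ≤ b) (i : ℕ) :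
    P {ω | ((i : ℝ) + 1) ≤ (w ⬝ᵥ ε ω) ^ 2} ≤
      ENNReal.ofReal (2 * Real.exp (-(((i : ℝ) + 1) * (1 / (2 * b * σ ^ 2))))) := by
  have hipos : (0:ℝ) < (i : ℝ) + 1 := by positivity
  rcases eq_or_lt_of_le (Finset.sum_nonneg (fun j _ => sq_nonneg (w j))) with h0 | h0
  · -- w = 0
    have hwz : w = 0 := by
      funext j
      have := (Finset.sum_eq_zero_iff_of_nonneg (fun j _ => sq_nonneg (w j))).mp h0.symm j
        (mem_univ j)
      exact pow_eq_zero_iff (n := 2) (by norm_num) |>.mp this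
    have : {ω | ((i : ℝ) + 1) ≤ (w ⬝ᵥ ε ω) ^ 2} = ∅ := by
      ext ω; simp [hwz, zero_dotProduct]
      linarith
    rw [this]
    simp
  · set q : ℝ := Real.sqrt (∑ j, w j ^ 2) with hq
    have hqpos : 0 < q := Real.sqrt_pos.mpr h0
    have hq2 : q ^ 2 = ∑ j, w j ^ 2 := Real.sq_sqrt h0.le
    set ν : Fin d → ℝ := q⁻¹ • w with hν
    have hν1 : (∑ j, ν j ^ 2) = 1 := by
      simp only [hν, Pi.smul_apply, smul_eq_mul, mul_pow, ← Finset.mul_sum, ← hq2]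
      field_simp
    set t : ℝ := Real.sqrt ((i : ℝ) + 1) / q with ht
    have htpos : 0 < t := div_pos (Real.sqrt_pos.mpr hipos) hqpos
    have hsubset : {ω | ((i : ℝ) + 1) ≤ (w ⬝ᵥ ε ω) ^ 2} ⊆ {ω | t ≤ |ν ⬝ᵥ ε ω|} := by
      intro ω hω
      simp only [Set.mem_setOf_eq] at hω ⊢
      have hwε : w ⬝ᵥ ε ω = q * (ν ⬝ᵥ ε ω) := by
        rw [hν, smul_dotProduct]
        simp [smul_eq_mul]
        field_simp
      rw [hwε, mul_pow] at hω
      have h1 : Real.sqrt ((i : ℝ) + 1) ≤ Real.sqrt (q ^ 2 * (ν ⬝ᵥ ε ω) ^ 2) :=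
        Real.sqrt_le_sqrt hω
      rw [Real.sqrt_mul (sq_nonneg q), Real.sqrt_sq_eq_abs, Real.sqrt_sq_eq_abs,
        abs_of_pos hqpos] at h1
      rw [ht, div_le_iff₀ hqpos]
      linarith [h1]
    calc P {ω | ((i : ℝ) + 1) ≤ (w ⬝ᵥ ε ω) ^ 2} ≤ P {ω | t ≤ |ν ⬝ᵥ ε ω|} :=
          measure_mono hsubset
      _ ≤ ENNReal.ofReal (2 * Real.exp (-t ^ 2 / (2 * σ ^ 2))) := hs ν hν1 t htpos.le
      _ ≤ ENNReal.ofReal (2 * Real.exp (-(((i : ℝ) + 1) * (1 / (2 * b * σ ^ 2))))) := by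
          apply ENNReal.ofReal_le_ofReal
          apply mul_le_mul_of_nonneg_left _ (by norm_num : (0:ℝ) ≤ 2)
          apply Real.exp_le_exp.mpr
          have ht2 : t ^ 2 = ((i : ℝ) + 1) / q ^ 2 := by
            rw [ht, div_pow, Real.sq_sqrt hipos.le]
          rw [ht2]
          have hqb : q ^ 2 ≤ b := hq2.trans_le hwb
          have h1 : ((i:ℝ) + 1) * (1 / (2 * b * σ ^ 2)) ≤ ((i:ℝ) + 1) / q ^ 2 / (2 * σ ^ 2) := by
            rw [div_div, mul_one_div]
            apply div_le_div_of_nonneg_left hipos.le (by positivity)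
            nlinarith [sq_nonneg σ, hσ]
          rw [neg_div]
          exact neg_le_neg h1



set_option maxHeartbeats 1000000 in
/-- Corollary 3: the heterogeneity-model oracle estimators converge at the rate
`√(|S_{m,k}|/n_{m,k})` in probability, uniformly over the datasets. -/
theorem hetero_oracle_rate_of_convergence
    {Ω : Type*} [MeasurableSpace Ω] (P : Measure Ω) [IsProbabilityMeasure P]
    (M : ℕ) (p : ℕ → ℕ) (n : ℕ → Fin M → ℕ) (hnpos : ∀ k m, 0 < n k m)
    (N : ℕ → ℕ) (hN : ∀ k, N k = ∑ m, n k m)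
    (hNtop : Tendsto N atTop atTop)
    (X : ∀ k : ℕ, ∀ m : Fin M, Matrix (Fin (n k m)) (Fin (p k)) ℝ)
    (W : ∀ k : ℕ, ∀ m : Fin M, Matrix (Fin (n k m)) (Fin (n k m)) ℝ)
    (hWdiag : ∀ k m, (W k m).IsDiag) (hWnonneg : ∀ k m i, 0 ≤ W k m i i)
    (βs : ∀ k : ℕ, Fin (p k) → Fin M → ℝ)
    (ε : ∀ k : ℕ, ∀ m : Fin M, Ω → Fin (n k m) → ℝ)
    (σ : Fin M → ℝ) (hσ : ∀ m, 0 < σ m)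
    (hsub : ∀ k m, SubG P (ε k m) (σ m))
    (Y : ∀ k : ℕ, ∀ m : Fin M, Ω → Fin (n k m) → ℝ)
    (hY : ∀ k m ω, Y k m ω = (X k m) *ᵥ (fun j => βs k j m) + ε k m ω)
    -- heterogeneity-model supports
    (Sm : ∀ k : ℕ, Fin M → Finset (Fin (p k)))
    (hSm : ∀ k m j, j ∈ Sm k m ↔ βs k j m ≠ 0)
    (Sf : ∀ k, Finset (Fin (p k))) (hSf : ∀ k, Sf k = Finset.univ.biUnion (Sm k))
    (hinv : ∀ k m,
      IsUnit ((colSub (X k m) (Sm k m))ᵀ * W k m * colSub (X k m) (Sm k m)).det)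
    -- oracle estimator: minimizes the restricted weighted LS loss
    (βc : ∀ k : ℕ, ∀ m : Fin M, Ω → ({j // j ∈ Sm k m} → ℝ))
    (hβc : ∀ k ω (cand : (m : Fin M) → ({j // j ∈ Sm k m} → ℝ)),
      (1 / (2 * (N k : ℝ))) * ∑ m,
          (Y k m ω - (colSub (X k m) (Sm k m)) *ᵥ (βc k m ω)) ⬝ᵥ
            (W k m *ᵥ (Y k m ω - (colSub (X k m) (Sm k m)) *ᵥ (βc k m ω))) ≤
        (1 / (2 * (N k : ℝ))) * ∑ m,
          (Y k m ω - (colSub (X k m) (Sm k m)) *ᵥ cand m) ⬝ᵥ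
            (W k m *ᵥ (Y k m ω - (colSub (X k m) (Sm k m)) *ᵥ cand m)))
    (ρ1 ρ2 : ℕ → Fin M → ℝ)
    (hρ1 : ∀ k m, ρ1 k m = lmin ((1 / (n k m : ℝ)) •
      ((colSub (X k m) (Sm k m))ᵀ * W k m * colSub (X k m) (Sm k m))))
    (hρ2 : ∀ k m, ρ2 k m = lmax ((1 / (n k m : ℝ)) •
      ((colSub (X k m) (Sm k m))ᵀ * W k m * W k m * colSub (X k m) (Sm k m))))
    (c C : ℝ) (hc : 0 < c) (hcC : c ≤ C)
    (hbnd : ∀ k m, c ≤ ρ1 k m ∧ ρ2 k m ≤ C)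
    (hbal : ∀ k m, (N k : ℝ) / (n k m : ℝ) ≤ C)
    (hSsmall : Tendsto (fun k => ((Sf k).card : ℝ) / (N k : ℝ)) atTop (nhds 0)) :
    ∀ δ : ℝ, 0 < δ → ∃ C' : ℝ, ∃ K : ℕ, ∀ k, K ≤ k →
      P {ω | ∃ m : Fin M,
          C' * Real.sqrt (((Sm k m).card : ℝ) / (n k m : ℝ)) <
            Real.sqrt (∑ j : {j // j ∈ Sm k m},
              (βc k m ω j - βs k (j : Fin (p k)) m) ^ 2)} ≤
        ENNReal.ofReal δ := by
  
  intro δ hδ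
  have hC : 0 < C := lt_of_lt_of_le hc hcC
  rcases Nat.eq_zero_or_pos M with hM | hM
  · -- no datasets: the event is empty
    subst hM
    refine ⟨1, 0, fun k _ => ?_⟩
    have hempty : {ω : Ω | ∃ m : Fin 0,
        (1:ℝ) * Real.sqrt (((Sm k m).card : ℝ) / (n k m : ℝ)) <
          Real.sqrt (∑ j : {j // j ∈ Sm k m},
            (βc k m ω j - βs k (j : Fin (p k)) m) ^ 2)} = ∅ := by
      ext ω; simp only [Set.mem_setOf_eq, Set.mem_empty_iff_false, iff_false, not_exists]
      exact fun m => m.elim0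
    rw [hempty, measure_empty]
    exact bot_le
  -- constants
  set B : Fin M → ℝ := fun m => 1 + 4 * C * (σ m) ^ 2 with hB
  have hBpos : ∀ m, 0 < B m := by
    intro m
    have := sq_nonneg (σ m)
    have : 0 ≤ 4 * C * (σ m) ^ 2 := by positivity
    simp only [hB]; linarith
  set D : ℝ := (M : ℝ) * (∑ m, B m) / (δ * c ^ 2) with hD
  have hD0 : 0 ≤ D := by
    apply div_nonneg _ (by positivity)
    exact mul_nonneg (Nat.cast_nonneg M) (Finset.sum_nonneg fun m _ => (hBpos m).le)
  set C' : ℝ := 1 + Real.sqrt D with hC'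
  have hC'1 : 1 ≤ C' := by
    have := Real.sqrt_nonneg D; simp only [hC']; linarith
  have hC'pos : 0 < C' := lt_of_lt_of_le one_pos hC'1
  have hC'sq : ∀ m, (M : ℝ) * B m / (δ * c ^ 2) ≤ C' ^ 2 := by
    intro m
    have h1 : (M : ℝ) * B m / (δ * c ^ 2) ≤ D := by
      apply div_le_div_of_nonneg_right ?_ (by positivity)
      exact mul_le_mul_of_nonneg_left
        (Finset.single_le_sum (fun m' _ => (hBpos m').le) (mem_univ m)) (Nat.cast_nonneg M)
    have h2 : D ≤ C' ^ 2 := by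
      have hs := Real.sq_sqrt hD0
      nlinarith [Real.sqrt_nonneg D]
    exact h1.trans h2
  refine ⟨C', 0, fun k _ => ?_⟩
  -- per-dataset events
  set E : Fin M → Set Ω := fun m => {ω |
    C' * Real.sqrt (((Sm k m).card : ℝ) / (n k m : ℝ)) <
      Real.sqrt (∑ j : {j // j ∈ Sm k m}, (βc k m ω j - βs k (j : Fin (p k)) m) ^ 2)} with hE
  have hsubU : {ω : Ω | ∃ m : Fin M,
      C' * Real.sqrt (((Sm k m).card : ℝ) / (n k m : ℝ)) <
        Real.sqrt (∑ j : {j // j ∈ Sm k m},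
          (βc k m ω j - βs k (j : Fin (p k)) m) ^ 2)} ⊆ ⋃ m, E m := by
    rintro ω ⟨m, hm⟩
    exact Set.mem_iUnion.mpr ⟨m, hm⟩
  -- per-dataset bound
  have hEm : ∀ m : Fin M, P (E m) ≤ ENNReal.ofReal (δ / M) := by
    intro m
    set nn : ℕ := n k m with hnn
    have hnn0 : 0 < nn := hnpos k m
    have hnn0' : (0:ℝ) < nn := Nat.cast_pos.mpr hnn0
    set S : Finset (Fin (p k)) := Sm k m with hS
    set Xs : Matrix (Fin nn) {j // j ∈ S} ℝ := colSub (X k m) S with hXs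
    set Wm : Matrix (Fin nn) (Fin nn) ℝ := W k m with hWm
    have hWsym : Wmᵀ = Wm := (hWdiag k m).isSymm
    -- the support is nonempty
    have hScard : 0 < S.card := by
      rcases Finset.eq_empty_or_nonempty S with hSe | hSe
      · exfalso
        haveI : IsEmpty {j // j ∈ S} := ⟨fun j => by rw [hSe] at j; exact (Finset.notMem_empty _ j.2)⟩
        have h0 := lmin_empty ((1 / (nn : ℝ)) • (Xsᵀ * Wm * Xs))
        have := (hbnd k m).1
        rw [hρ1 k m] at this
        rw [← hS, ← hXs, ← hWm] at this
        rw [h0] at this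
        linarith
      · exact Finset.card_pos.mpr hSe
    have hScard' : (0:ℝ) < S.card := Nat.cast_pos.mpr hScard
    -- coordinate vectors
    set w : {j // j ∈ S} → (Fin nn → ℝ) := fun j => Wm *ᵥ (Xs *ᵥ Pi.single j 1) with hw
    set g : {j // j ∈ S} → Ω → ℝ := fun j ω => (w j ⬝ᵥ ε k m ω) ^ 2 with hg
    -- bound on ∑ (w j)²
    have hwbound : ∀ j, (∑ i, (w j i) ^ 2) ≤ (nn : ℝ) * C := by
      intro j
      have hsingle : (∑ j' : {j // j ∈ S}, ((Pi.single j 1 : {j // j ∈ S} → ℝ) j') ^ 2) = 1 := by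
        rw [Finset.sum_eq_single j]
        · simp
        · intro j' _ hj'; rw [Pi.single_eq_of_ne hj']; ring
        · intro hj; exact absurd (mem_univ j) hj
      have hray := le_lmax ((1 / (nn : ℝ)) • (Xsᵀ * Wm * Wm * Xs)) (Pi.single j 1) hsingle
      have heig : lmax ((1 / (nn : ℝ)) • (Xsᵀ * Wm * Wm * Xs)) ≤ C := by
        have := (hbnd k m).2
        rw [hρ2 k m] at this
        rw [← hS, ← hXs, ← hWm] at this
        exact this
      have hquad : (Pi.single j (1:ℝ)) ⬝ᵥ (((1 / (nn : ℝ)) • (Xsᵀ * Wm * Wm * Xs)) *ᵥ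
          Pi.single j 1) = (1 / (nn : ℝ)) * (w j ⬝ᵥ w j) := by
        rw [Matrix.smul_mulVec, dotProduct_smul, smul_eq_mul]
        congr 1
        have hmv : (Xsᵀ * Wm * Wm * Xs) *ᵥ Pi.single j 1 =
            Xsᵀ *ᵥ (Wm *ᵥ (Wm *ᵥ (Xs *ᵥ Pi.single j 1))) := by
          rw [Matrix.mulVec_mulVec, Matrix.mulVec_mulVec, Matrix.mulVec_mulVec]
        rw [hmv, ← dot_shift, dot_symm Wm hWsym]
      have hww : w j ⬝ᵥ w j = ∑ i, (w j i) ^ 2 := by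
        simp [dotProduct, pow_two]
      rw [hquad, hww] at hray
      calc (∑ i, (w j i) ^ 2) = (nn : ℝ) * ((1 / (nn : ℝ)) * (∑ i, (w j i) ^ 2)) := by
            field_simp
        _ ≤ (nn : ℝ) * C := by
            apply mul_le_mul_of_nonneg_left (hray.trans heig) hnn0'.le
    -- sub-Gaussian tails of the coordinates
    set a : ℝ := 1 / (2 * ((nn : ℝ) * C) * (σ m) ^ 2) with ha
    have ha0 : 0 < a := by
      have := hσ m; positivity
    have htail : ∀ j, ∀ i : ℕ, P {ω | ((i : ℝ) + 1) ≤ g j ω} ≤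
        ENNReal.ofReal (2 * Real.exp (-(((i : ℝ) + 1) * a))) := by
      intro j i
      exact subG_dot_tail P (ε k m) (σ m) (hσ m) (hsub k m) (w j) ((nn : ℝ) * C)
        (mul_pos hnn0' hC) (hwbound j) i
    -- Markov bound
    set T : ℝ := C' ^ 2 * c ^ 2 * nn * S.card with hT
    have hT0 : 0 < T := by
      rw [hT]
      exact mul_pos (mul_pos (mul_pos (pow_pos hC'pos 2) (pow_pos hc 2)) hnn0') hScard'
    have hmarkov := markov_sum_sq P g (fun j ω => sq_nonneg _) a ha0 htail T hT0
    -- deterministic inclusion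
    have hdet : E m ⊆ {ω | T ≤ ∑ j, g j ω} := by
      intro ω hω
      simp only [hE, Set.mem_setOf_eq] at hω ⊢
      set v : {j // j ∈ S} → ℝ := fun j => βc k m ω j - βs k (j : Fin (p k)) m with hv
      set Q : ℝ := ∑ j, v j ^ 2 with hQ
      have hQ0 : 0 ≤ Q := Finset.sum_nonneg fun j _ => sq_nonneg _
      have hsqrtQ : C' * Real.sqrt (((S.card : ℝ)) / (nn : ℝ)) < Real.sqrt Q := hω
      have hQpos : 0 < Q := by
        rw [← Real.sqrt_pos]
        calc (0:ℝ) ≤ C' * Real.sqrt ((S.card : ℝ) / (nn : ℝ)) :=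
              mul_nonneg hC'pos.le (Real.sqrt_nonneg _)
          _ < Real.sqrt Q := hsqrtQ
      have hsq : C' ^ 2 * ((S.card : ℝ) / (nn : ℝ)) < Q := by
        have h2 := pow_lt_pow_left₀ hsqrtQ
          (mul_nonneg hC'pos.le (Real.sqrt_nonneg _)) (by norm_num : 2 ≠ 0)
        rw [mul_pow, Real.sq_sqrt (div_nonneg hScard'.le hnn0'.le),
          Real.sq_sqrt hQ0] at h2
        exact h2
      -- normal equations
      have hNk : (0:ℝ) < (N k : ℝ) := by
        have : 0 < N k := by
          rw [hN k]
          exact Finset.sum_pos (fun m' _ => hnpos k m') ⟨m, mem_univ m⟩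
        exact_mod_cast this
      have hmin : ∀ gg : {j // j ∈ S} → ℝ,
          (Y k m ω - Xs *ᵥ (βc k m ω)) ⬝ᵥ (Wm *ᵥ (Y k m ω - Xs *ᵥ (βc k m ω))) ≤
            (Y k m ω - Xs *ᵥ gg) ⬝ᵥ (Wm *ᵥ (Y k m ω - Xs *ᵥ gg)) := by
        intro gg
        have h := hβc k ω (Function.update (fun m' => βc k m' ω) m gg)
        have hpos : (0:ℝ) < 1 / (2 * (N k : ℝ)) := by positivity
        rw [mul_le_mul_iff_of_pos_left hpos] at h
        rw [← Finset.add_sum_erase _ _ (mem_univ m), ← Finset.add_sum_erase _ _ (mem_univ m)] at h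
        have herase : ∑ m' ∈ univ.erase m,
            (Y k m' ω - (colSub (X k m') (Sm k m')) *ᵥ
              ((Function.update (fun m'' => βc k m'' ω) m gg) m')) ⬝ᵥ
              (W k m' *ᵥ (Y k m' ω - (colSub (X k m') (Sm k m')) *ᵥ
                ((Function.update (fun m'' => βc k m'' ω) m gg) m'))) =
            ∑ m' ∈ univ.erase m,
            (Y k m' ω - (colSub (X k m') (Sm k m')) *ᵥ (βc k m' ω)) ⬝ᵥ
              (W k m' *ᵥ (Y k m' ω - (colSub (X k m') (Sm k m')) *ᵥ (βc k m' ω))) := by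
          apply Finset.sum_congr rfl
          intro m' hm'
          rw [Function.update_of_ne (Finset.ne_of_mem_erase hm')]
        rw [herase, Function.update_self] at h
        linarith [h]
      have hNE := normal_eq Xs Wm hWsym (Y k m ω) (βc k m ω) hmin
      -- rewrite the residual using the support
      have hXβ : (X k m) *ᵥ (fun j => βs k j m) =
          Xs *ᵥ (fun j : {j // j ∈ S} => βs k (j : Fin (p k)) m) := by
        funext i
        show (fun j => X k m i j) ⬝ᵥ (fun j => βs k j m) =
          (fun j : {j // j ∈ S} => Xs i j) ⬝ᵥ (fun j : {j // j ∈ S} => βs k (j : Fin (p k)) m)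
        simp only [dotProduct, hXs, colSub, Matrix.submatrix_apply, id_eq]
        rw [Finset.univ_eq_attach]
        rw [Finset.sum_attach S (fun j => X k m i j * βs k j m)]
        symm
        apply Finset.sum_subset (Finset.subset_univ S)
        intro j _ hj
        have : βs k j m = 0 := by
          by_contra hne
          exact hj ((hSm k m j).mpr hne)
        rw [this, mul_zero]
      have hres : Y k m ω - Xs *ᵥ (βc k m ω) = ε k m ω - Xs *ᵥ v := by
        rw [hY k m ω, hXβ]
        have : Xs *ᵥ v = Xs *ᵥ (βc k m ω) - Xs *ᵥ (fun j : {j // j ∈ S} =>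
            βs k (j : Fin (p k)) m) := by
          rw [← Matrix.mulVec_sub]
          rfl
        rw [this]
        abel
      set u : {j // j ∈ S} → ℝ := Xsᵀ *ᵥ (Wm *ᵥ ε k m ω) with hu
      have hAv : (Xsᵀ * Wm * Xs) *ᵥ v = u := by
        rw [hres] at hNE
        rw [Matrix.mulVec_sub, Matrix.mulVec_sub] at hNE
        have := sub_eq_zero.mp hNE
        rw [hu, this, Matrix.mulVec_mulVec, Matrix.mulVec_mulVec]
      -- eigenvalue lower bound
      have hQle : (nn : ℝ) * c * Q ≤ v ⬝ᵥ u := by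
        have hray := lmin_mul_le ((1 / (nn : ℝ)) • (Xsᵀ * Wm * Xs)) v
        have heig : c ≤ lmin ((1 / (nn : ℝ)) • (Xsᵀ * Wm * Xs)) := by
          have := (hbnd k m).1
          rw [hρ1 k m] at this
          rw [← hS, ← hXs, ← hWm] at this
          exact this
        have hquad : v ⬝ᵥ (((1 / (nn : ℝ)) • (Xsᵀ * Wm * Xs)) *ᵥ v) =
            (1 / (nn : ℝ)) * (v ⬝ᵥ u) := by
          rw [Matrix.smul_mulVec, dotProduct_smul, smul_eq_mul, hAv]
        rw [hquad, ← hQ] at hray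
        have h1 : c * Q ≤ (1 / (nn : ℝ)) * (v ⬝ᵥ u) :=
          le_trans (mul_le_mul_of_nonneg_right heig hQ0) hray
        calc (nn : ℝ) * c * Q = (nn : ℝ) * (c * Q) := by ring
          _ ≤ (nn : ℝ) * ((1 / (nn : ℝ)) * (v ⬝ᵥ u)) :=
            mul_le_mul_of_nonneg_left h1 hnn0'.le
          _ = v ⬝ᵥ u := by field_simp
      -- Cauchy–Schwarz
      set U : ℝ := ∑ j, u j ^ 2 with hU
      have hCS : (v ⬝ᵥ u) ^ 2 ≤ Q * U := by
        rw [hQ, hU]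
        exact Finset.sum_mul_sq_le_sq_mul_sq Finset.univ v u
      have hUge : ((nn : ℝ) * c) ^ 2 * Q ≤ U := by
        have h1 : ((nn : ℝ) * c * Q) ^ 2 ≤ (v ⬝ᵥ u) ^ 2 := by
          apply pow_le_pow_left₀ (by positivity) hQle
        have h2 : ((nn : ℝ) * c) ^ 2 * Q ^ 2 ≤ Q * U := by
          calc ((nn : ℝ) * c) ^ 2 * Q ^ 2 = ((nn : ℝ) * c * Q) ^ 2 := by ring
            _ ≤ (v ⬝ᵥ u) ^ 2 := h1
            _ ≤ Q * U := hCS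
        nlinarith [hQpos]
      -- conclude
      have hgu : ∀ j, g j ω = u j ^ 2 := by
        intro j
        have huj : u j = w j ⬝ᵥ ε k m ω := by
          have h1 : Pi.single j (1:ℝ) ⬝ᵥ u = u j := by
            rw [single_dotProduct, one_mul]
          rw [← h1, hu, ← dot_shift, dot_symm Wm hWsym, dotProduct_comm]
        rw [hg, huj]
      have hsumg : ∑ j, g j ω = U := by
        rw [hU]
        exact Finset.sum_congr rfl fun j _ => hgu j
      rw [hsumg]
      have hTlt : T < U := by
        calc T = ((nn : ℝ) * c) ^ 2 * (C' ^ 2 * ((S.card : ℝ) / (nn : ℝ))) := by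
              rw [hT]
              have hne : (nn:ℝ) ≠ 0 := ne_of_gt hnn0'
              field_simp
          _ < ((nn : ℝ) * c) ^ 2 * Q := by
              apply mul_lt_mul_of_pos_left hsq (pow_pos (mul_pos hnn0' hc) 2)
          _ ≤ U := hUge
      exact hTlt.le
    -- combine
    have hcard : (Fintype.card {j // j ∈ S} : ℝ) = (S.card : ℝ) := by
      rw [Fintype.card_coe]
    have hnum : (Fintype.card {j // j ∈ S} : ℝ) * (1 + 2 / a) / T ≤ δ / M := by
      rw [hcard]
      have h2a : 2 / a = 4 * (nn : ℝ) * C * (σ m) ^ 2 := by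
        rw [ha]
        field_simp
        ring
      rw [h2a, hT]
      rw [div_le_div_iff₀
        (mul_pos (mul_pos (mul_pos (pow_pos hC'pos 2) (pow_pos hc 2)) hnn0') hScard')
        (by exact_mod_cast hM : (0:ℝ) < (M:ℝ))]
      have hkey : (M : ℝ) * B m ≤ C' ^ 2 * (δ * c ^ 2) := by
        have := hC'sq m
        rw [div_le_iff₀ (by positivity)] at this
        linarith
      have hnn1 : (1:ℝ) ≤ (nn : ℝ) := by exact_mod_cast hnn0
      have hσ2 : (0:ℝ) ≤ (σ m) ^ 2 := sq_nonneg _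
      have hkey2 : (M : ℝ) * (1 + 4 * C * (σ m) ^ 2) ≤ C' ^ 2 * (δ * c ^ 2) := by
        rw [hB] at hkey; exact hkey
      have H1 := mul_le_mul_of_nonneg_right hkey2
        (mul_nonneg hnn0'.le hScard'.le)
      have e0 : (0:ℝ) ≤ (M:ℝ) * (S.card : ℝ) :=
        mul_nonneg (Nat.cast_nonneg M) hScard'.le
      have e1 : (M:ℝ) * (S.card : ℝ) ≤ (M:ℝ) * (nn:ℝ) * (S.card : ℝ) := by
        nlinarith [mul_le_mul_of_nonneg_left hnn1 e0]
      nlinarith [H1, e1, hσ2, hC, hScard', hnn0']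
    calc P (E m) ≤ P {ω | T ≤ ∑ j, g j ω} := measure_mono hdet
      _ ≤ ENNReal.ofReal ((Fintype.card {j // j ∈ S}) * (1 + 2 / a) / T) := hmarkov
      _ ≤ ENNReal.ofReal (δ / M) := ENNReal.ofReal_le_ofReal hnum
  -- union bound
  calc P {ω : Ω | ∃ m : Fin M,
        C' * Real.sqrt (((Sm k m).card : ℝ) / (n k m : ℝ)) <
          Real.sqrt (∑ j : {j // j ∈ Sm k m},
            (βc k m ω j - βs k (j : Fin (p k)) m) ^ 2)}
      ≤ P (⋃ m, E m) := measure_mono hsubU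
    _ ≤ ∑' m : Fin M, P (E m) := measure_iUnion_le E
    _ ≤ ∑' m : Fin M, ENNReal.ofReal (δ / M) := ENNReal.tsum_le_tsum hEm
    _ = (M : ENNReal) * ENNReal.ofReal (δ / M) := by
        rw [tsum_fintype]
        simp [Finset.sum_const, Finset.card_univ, nsmul_eq_mul]
    _ = ENNReal.ofReal δ := by
        rw [← ENNReal.ofReal_natCast M, ← ENNReal.ofReal_mul (Nat.cast_nonneg M)]
        congr 1
        field_simp
end
end

section
/- Let S be a finite index set with |S| elements, let M ∈ ℕ, and for each j ∈ S let β*_j ∈ ℝ^M and u_j ∈ ℝ^M; let r = (r_1,…,r_M) ∈ ℝ^M with every r_m ≥ 0, and write r∘u_j for the componentwise (Hadamard) product, (r∘u_j)_m = r_m u_j^m. If ∑_{j∈S} (u_j^m)² = 1 for every m = 1,…,M, then ∑_{j∈S} ( ‖β*_j + r∘u_j‖₂ − ‖β*_j‖₂ ) ≤ √|S| · ∑_{m=1}^M r_m, where ‖·‖₂ is the Euclidean norm on ℝ^M. -/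
open Finset Real

noncomputable section

lemma tri_aux {M : ℕ} (b c : Fin M → ℝ) :
    Real.sqrt (∑ m, (b m + c m) ^ 2) - Real.sqrt (∑ m, b m ^ 2) ≤
      Real.sqrt (∑ m, c m ^ 2) := by
  have h := norm_add_le (E := EuclideanSpace ℝ (Fin M)) (WithLp.toLp 2 b) (WithLp.toLp 2 c)
  simp only [EuclideanSpace.norm_eq, Real.norm_eq_abs, sq_abs] at h
  have he : ∀ x, (b + c) x = b x + c x := fun _ => rfl
  simp only [PiLp.add_apply, PiLp.toLp_apply] at h
  linarith

/-- Deterministic bound on the group-penalty increment (term Q₃ in the proof of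
Theorem 1): `∑_{j∈S} (‖β*_j + r∘u_j‖₂ − ‖β*_j‖₂) ≤ √|S| ∑_m r_m`. -/
theorem group_penalty_increment_bound
    {ι : Type*} [Fintype ι] (M : ℕ)
    (βs u : ι → Fin M → ℝ) (r : Fin M → ℝ)
    (hr : ∀ m, 0 ≤ r m)
    (hu : ∀ m, (∑ j, u j m ^ 2) = 1) :
    ∑ j, (Real.sqrt (∑ m, (βs j m + r m * u j m) ^ 2) -
        Real.sqrt (∑ m, βs j m ^ 2)) ≤
      Real.sqrt (Fintype.card ι) * ∑ m, r m := by
  -- step 1: triangle inequality per j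
  have step1 : ∑ j, (Real.sqrt (∑ m, (βs j m + r m * u j m) ^ 2) -
      Real.sqrt (∑ m, βs j m ^ 2)) ≤ ∑ j, Real.sqrt (∑ m, (r m * u j m) ^ 2) :=
    Finset.sum_le_sum fun j _ => tri_aux (βs j) (fun m => r m * u j m)
  -- step 2: Cauchy-Schwarz
  have key : ∑ j, (∑ m, (r m * u j m) ^ 2) = ∑ m, r m ^ 2 := by
    rw [Finset.sum_comm]
    refine Finset.sum_congr rfl fun m _ => ?_
    have : ∑ j, (r m * u j m) ^ 2 = r m ^ 2 * ∑ j, u j m ^ 2 := by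
      rw [Finset.mul_sum]; refine Finset.sum_congr rfl fun j _ => by ring
    rw [this, hu m, mul_one]
  have cs : (∑ j, Real.sqrt (∑ m, (r m * u j m) ^ 2)) ^ 2 ≤
      (Fintype.card ι : ℝ) * ∑ m, r m ^ 2 := by
    have h := Finset.sum_mul_sq_le_sq_mul_sq Finset.univ (fun _ : ι => (1 : ℝ))
      (fun j => Real.sqrt (∑ m, (r m * u j m) ^ 2))
    simp only [one_mul, one_pow, Finset.sum_const, nsmul_eq_mul, mul_one] at h
    have hsq : ∀ j : ι, Real.sqrt (∑ m, (r m * u j m) ^ 2) ^ 2 =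
        ∑ m, (r m * u j m) ^ 2 := fun j =>
      Real.sq_sqrt (Finset.sum_nonneg fun m _ => sq_nonneg _)
    calc (∑ j, Real.sqrt (∑ m, (r m * u j m) ^ 2)) ^ 2
        ≤ (Fintype.card ι : ℝ) * ∑ j, Real.sqrt (∑ m, (r m * u j m) ^ 2) ^ 2 := h
      _ = (Fintype.card ι : ℝ) * ∑ m, r m ^ 2 := by
          rw [Finset.sum_congr rfl fun j _ => hsq j, key]
  have h2 : ∑ j, Real.sqrt (∑ m, (r m * u j m) ^ 2) ≤
      Real.sqrt (Fintype.card ι) * Real.sqrt (∑ m, r m ^ 2) := by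
    rw [← Real.sqrt_mul (Nat.cast_nonneg _)]
    rw [show Real.sqrt ((Fintype.card ι : ℝ) * ∑ m, r m ^ 2) =
      Real.sqrt (((∑ j, Real.sqrt (∑ m, (r m * u j m) ^ 2)) ^ 2) +
        ((Fintype.card ι : ℝ) * ∑ m, r m ^ 2 -
          (∑ j, Real.sqrt (∑ m, (r m * u j m) ^ 2)) ^ 2)) by ring_nf]
    calc ∑ j, Real.sqrt (∑ m, (r m * u j m) ^ 2)
        = Real.sqrt ((∑ j, Real.sqrt (∑ m, (r m * u j m) ^ 2)) ^ 2) := by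
          rw [Real.sqrt_sq (Finset.sum_nonneg fun j _ => Real.sqrt_nonneg _)]
      _ ≤ _ := Real.sqrt_le_sqrt (by linarith)
  have h3 : Real.sqrt (∑ m, r m ^ 2) ≤ ∑ m, r m := by
    have := Finset.sum_sq_le_sq_sum_of_nonneg (s := Finset.univ) (f := r)
      (fun m _ => hr m)
    calc Real.sqrt (∑ m, r m ^ 2) ≤ Real.sqrt ((∑ m, r m) ^ 2) :=
        Real.sqrt_le_sqrt this
      _ = ∑ m, r m := Real.sqrt_sq (Finset.sum_nonneg fun m _ => hr m)
  calc ∑ j, (Real.sqrt (∑ m, (βs j m + r m * u j m) ^ 2) -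
      Real.sqrt (∑ m, βs j m ^ 2))
      ≤ ∑ j, Real.sqrt (∑ m, (r m * u j m) ^ 2) := step1
    _ ≤ Real.sqrt (Fintype.card ι) * Real.sqrt (∑ m, r m ^ 2) := h2
    _ ≤ Real.sqrt (Fintype.card ι) * ∑ m, r m :=
        mul_le_mul_of_nonneg_left h3 (Real.sqrt_nonneg _)
end
end

section
/- Let X ∈ ℝ^{n×p}, let W ∈ ℝ^{n×n} be diagonal with nonnegative entries, let S ⊆ {1,…,p} with complement S^c, let β*_S ∈ ℝ^{|S|}, ε ∈ ℝ^n, and Y = X_S β*_S + ε. Assume X_S^⊤ W X_S is invertible, set β̃_S = (X_S^⊤ W X_S)^{−1} X_S^⊤ W Y (the weighted least-squares estimator restricted to S), and set ψ = ‖X_{S^c}^⊤ W X_S (X_S^⊤ W X_S)^{−1}‖_∞. Then ‖X_{S^c}^⊤ W (Y − X_S β̃_S)‖_∞ ≤ (1 + ψ) ‖X^⊤ W ε‖_∞. -/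
open Matrix Finset Real

noncomputable section

/-- Maximum absolute row sum of a matrix (operator ∞-norm). -/
def rowSumNorm {ι κ : Type*} [Fintype ι] [Fintype κ] (A : Matrix ι κ ℝ) : ℝ :=
  ⨆ i, ∑ j, |A i j|

/-- Maximum absolute entry of a vector (ℓ∞ norm). -/
def vinf {ι : Type*} (v : ι → ℝ) : ℝ := ⨆ i, |v i|

lemma vinf_nonneg {ι : Type*} (v : ι → ℝ) : 0 ≤ vinf v :=
  Real.iSup_nonneg fun _ => abs_nonneg _

lemma rowSumNorm_nonneg {ι κ : Type*} [Fintype ι] [Fintype κ] (A : Matrix ι κ ℝ) :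
    0 ≤ rowSumNorm A :=
  Real.iSup_nonneg fun _ => Finset.sum_nonneg fun _ _ => abs_nonneg _

lemma abs_le_vinf {ι : Type*} [Fintype ι] (v : ι → ℝ) (i : ι) : |v i| ≤ vinf v :=
  le_ciSup (f := fun i => |v i|) (Set.finite_range _).bddAbove i

lemma vinf_mulVec {ι κ : Type*} [Fintype ι] [Fintype κ] (A : Matrix ι κ ℝ) (v : κ → ℝ) :
    vinf (A *ᵥ v) ≤ rowSumNorm A * vinf v := by
  apply Real.iSup_le _ (mul_nonneg (rowSumNorm_nonneg A) (vinf_nonneg v))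
  intro i
  calc |(A *ᵥ v) i| ≤ ∑ j, |A i j| * |v j| := by
        simpa [Matrix.mulVec, dotProduct, abs_mul] using
          Finset.abs_sum_le_sum_abs (fun j => A i j * v j) Finset.univ
    _ ≤ ∑ j, |A i j| * vinf v := Finset.sum_le_sum fun j _ =>
        mul_le_mul_of_nonneg_left (abs_le_vinf v j) (abs_nonneg _)
    _ = (∑ j, |A i j|) * vinf v := by rw [Finset.sum_mul]
    _ ≤ rowSumNorm A * vinf v := mul_le_mul_of_nonneg_right
        (le_ciSup (f := fun i => ∑ j, |A i j|) (Set.finite_range _).bddAbove i) (vinf_nonneg v)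

lemma vinf_sub_le {ι : Type*} [Fintype ι] (u w : ι → ℝ) :
    vinf (u - w) ≤ vinf u + vinf w := by
  apply Real.iSup_le _ (add_nonneg (vinf_nonneg u) (vinf_nonneg w))
  intro i
  calc |(u - w) i| ≤ |u i| + |w i| := by simpa using abs_sub (u i) (w i)
    _ ≤ vinf u + vinf w := add_le_add (abs_le_vinf u i) (abs_le_vinf w i)

lemma colSub_transpose_mulVec {d p : ℕ} (X : Matrix (Fin d) (Fin p) ℝ)
    (I : Finset (Fin p)) (v : Fin d → ℝ) (j : {j // j ∈ I}) :
    ((colSub X I)ᵀ *ᵥ v) j = (Xᵀ *ᵥ v) (j : Fin p) := by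
  simp [colSub, Matrix.mulVec, dotProduct, Matrix.submatrix]

lemma vinf_colSub_le {d p : ℕ} (X : Matrix (Fin d) (Fin p) ℝ)
    (I : Finset (Fin p)) (v : Fin d → ℝ) :
    vinf ((colSub X I)ᵀ *ᵥ v) ≤ vinf (Xᵀ *ᵥ v) := by
  apply Real.iSup_le _ (vinf_nonneg _)
  intro j
  rw [colSub_transpose_mulVec]
  exact abs_le_vinf _ _

/-- Inequality (S1.snorm) in the proof of Theorem 2: the weighted residual correlations on
`S^c` for the restricted weighted least-squares estimator are bounded by
`(1 + ψ)‖X^⊤ W ε‖_∞`. -/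
theorem wls_residual_inf_norm_bound
    (n p : ℕ) (X : Matrix (Fin n) (Fin p) ℝ)
    (W : Matrix (Fin n) (Fin n) ℝ)
    (hWdiag : W.IsDiag) (hWnonneg : ∀ i, 0 ≤ W i i)
    (S : Finset (Fin p)) (βS : {j // j ∈ S} → ℝ) (ε : Fin n → ℝ)
    (Y : Fin n → ℝ) (hY : Y = (colSub X S) *ᵥ βS + ε)
    (hinv : IsUnit ((colSub X S)ᵀ * W * colSub X S).det)
    (βt : {j // j ∈ S} → ℝ)
    (hβt : βt = ((colSub X S)ᵀ * W * colSub X S)⁻¹ *ᵥ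
      ((colSub X S)ᵀ *ᵥ (W *ᵥ Y)))
    (ψ : ℝ)
    (hψ : ψ = rowSumNorm
      ((colSub X Sᶜ)ᵀ * W * colSub X S * ((colSub X S)ᵀ * W * colSub X S)⁻¹)) :
    vinf ((colSub X Sᶜ)ᵀ *ᵥ (W *ᵥ (Y - colSub X S *ᵥ βt))) ≤
      (1 + ψ) * vinf (Xᵀ *ᵥ (W *ᵥ ε)) := by
  set AS := colSub X S with hAS
  set AC := colSub X Sᶜ with hAC
  set G := ASᵀ * W * AS with hG
  set t : {j // j ∈ S} → ℝ := ASᵀ *ᵥ (W *ᵥ ε) with ht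
  have hGG : G⁻¹ * ASᵀ * W * AS = 1 := by
    simp only [Matrix.mul_assoc]
    rw [← Matrix.mul_assoc ASᵀ W AS, ← hG, Matrix.nonsing_inv_mul _ hinv]
  have hβt2 : βt = βS + G⁻¹ *ᵥ t := by
    rw [hβt, hY]
    rw [Matrix.mulVec_add, Matrix.mulVec_add, Matrix.mulVec_add]
    congr 1
    rw [Matrix.mulVec_mulVec, Matrix.mulVec_mulVec, Matrix.mulVec_mulVec, hGG,
      Matrix.one_mulVec]
  have hres : Y - AS *ᵥ βt = ε - AS *ᵥ (G⁻¹ *ᵥ t) := by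
    rw [hβt2, hY, Matrix.mulVec_add]
    ext i
    simp [Pi.sub_apply, Pi.add_apply]
    try ring
  have key : ACᵀ *ᵥ (W *ᵥ (Y - AS *ᵥ βt)) =
      ACᵀ *ᵥ (W *ᵥ ε) - (ACᵀ * W * AS * G⁻¹) *ᵥ t := by
    rw [hres, Matrix.mulVec_sub, Matrix.mulVec_sub]
    simp only [Matrix.mulVec_mulVec, Matrix.mul_assoc]
  rw [key]
  have h1 : vinf (ACᵀ *ᵥ (W *ᵥ ε)) ≤ vinf (Xᵀ *ᵥ (W *ᵥ ε)) := vinf_colSub_le _ _ _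
  have h2 : vinf ((ACᵀ * W * AS * G⁻¹) *ᵥ t) ≤ ψ * vinf (Xᵀ *ᵥ (W *ᵥ ε)) := by
    calc vinf ((ACᵀ * W * AS * G⁻¹) *ᵥ t) ≤ rowSumNorm (ACᵀ * W * AS * G⁻¹) * vinf t :=
          vinf_mulVec _ _
      _ = ψ * vinf t := by rw [hψ]
      _ ≤ ψ * vinf (Xᵀ *ᵥ (W *ᵥ ε)) := by
          apply mul_le_mul_of_nonneg_left (vinf_colSub_le _ _ _)
          rw [hψ]; exact rowSumNorm_nonneg _
  calc vinf (ACᵀ *ᵥ (W *ᵥ ε) - (ACᵀ * W * AS * G⁻¹) *ᵥ t)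
      ≤ vinf (ACᵀ *ᵥ (W *ᵥ ε)) + vinf ((ACᵀ * W * AS * G⁻¹) *ᵥ t) := vinf_sub_le _ _
    _ ≤ vinf (Xᵀ *ᵥ (W *ᵥ ε)) + ψ * vinf (Xᵀ *ᵥ (W *ᵥ ε)) := add_le_add h1 h2
    _ = (1 + ψ) * vinf (Xᵀ *ᵥ (W *ᵥ ε)) := by ring
end
end
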